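/- Let N ≥ 1, let P_1,…,P_N > 0, let C > 0 and A ≥ 0 with a := A − C + 1 > 0, and suppose ξ > 0 is such that the vector Ω* defined by Ω*_n := max{(√(P_n/ξ) − C)/a, 0} satisfies Σ_{n=1}^N Ω*_n = 1. Then Ω* is a global maximizer of the objective Σ_{n=1}^N P_n·Ω_n/(a·Ω_n + C) over the simplex {Ω ∈ ℝ^N : Ω_n ≥ 0 for all n, Σ_n Ω_n = 1}. -/

import Mathlib

open Finset

lemma tangent_bound (P C a ξ x : ℝ) (hP : 0 < P) (hC : 0 < C) (ha : 0 < a)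
    (hξ : 0 < ξ) (hx : 0 ≤ x) :
    P * x / (a * x + C) ≤
      P * max ((Real.sqrt (P / ξ) - C) / a) 0 /
        (a * max ((Real.sqrt (P / ξ) - C) / a) 0 + C)
        + C * ξ * (x - max ((Real.sqrt (P / ξ) - C) / a) 0) := by
  set s := Real.sqrt (P / ξ) with hs
  have hs0 : 0 ≤ s := Real.sqrt_nonneg _
  have hs2 : s ^ 2 = P / ξ := Real.sq_sqrt (by positivity)
  have hPs : P = ξ * s ^ 2 := by rw [hs2]; field_simp
  have ht : 0 < a * x + C := by positivity
  rcases le_or_gt s C with h | h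
  · have hmax : max ((s - C) / a) 0 = 0 :=
      max_eq_right (div_nonpos_of_nonpos_of_nonneg (by linarith) ha.le)
    rw [hmax]
    have h1 : P * x / (a * x + C) ≤ C * ξ * x := by
      rw [div_le_iff₀ ht]
      nlinarith [mul_nonneg (mul_nonneg (mul_nonneg hξ.le hx) (mul_nonneg ha.le hx)) hC.le,
        mul_nonneg (mul_nonneg hξ.le hx)
          (mul_nonneg (by linarith : (0:ℝ) ≤ C - s) (by linarith : (0:ℝ) ≤ C + s))]
    simpa using h1
  · have hsp : 0 < s := hC.trans h
    have hmax : max ((s - C) / a) 0 = (s - C) / a :=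
      max_eq_left (le_of_lt (div_pos (by linarith) ha))
    rw [hmax]
    have hy : a * ((s - C) / a) + C = s := by field_simp; ring
    rw [hy]
    have key : P * ((s - C) / a) / s + C * ξ * (x - (s - C) / a) - P * x / (a * x + C)
        = C * ξ * (a * x + C - s) ^ 2 / (a * (a * x + C)) := by
      rw [hPs]; field_simp; ring
    nlinarith [div_nonneg (mul_nonneg (mul_nonneg hC.le hξ.le)
      (sq_nonneg (a * x + C - s))) (by positivity : (0:ℝ) ≤ a * (a * x + C))]

/-- **Optimality of the water-filling solution (Eq. (24)).** Let `P_n > 0`, `C > 0`,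
`A ≥ 0` with `a := A − C + 1 > 0`, and suppose `ξ > 0` is such that
`Ω*_n := max{(√(P_n/ξ) − C)/a, 0}` satisfies `Σ_n Ω*_n = 1`. Then `Ω*` globally
maximizes `Σ_n P_n·Ω_n/(a·Ω_n + C)` over the probability simplex. -/
theorem optimized_random_caching (N : ℕ) (hN : 1 ≤ N) (P : Fin N → ℝ)
    (hP : ∀ n, 0 < P n) (C A : ℝ) (hC : 0 < C) (hA : 0 ≤ A) (ha : 0 < A - C + 1)
    (ξ : ℝ) (hξ : 0 < ξ)
    (hsum : ∑ n, max ((Real.sqrt (P n / ξ) - C) / (A - C + 1)) 0 = 1) :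
    ∀ Ω : Fin N → ℝ, (∀ n, 0 ≤ Ω n) → ∑ n, Ω n = 1 →
      ∑ n, P n * Ω n / ((A - C + 1) * Ω n + C) ≤
        ∑ n, P n * max ((Real.sqrt (P n / ξ) - C) / (A - C + 1)) 0 /
          ((A - C + 1) * max ((Real.sqrt (P n / ξ) - C) / (A - C + 1)) 0 + C) := by
  intro Ω hΩ hΩsum
  set Ωs := fun n => max ((Real.sqrt (P n / ξ) - C) / (A - C + 1)) 0 with hΩs
  calc ∑ n, P n * Ω n / ((A - C + 1) * Ω n + C)
      ≤ ∑ n, (P n * Ωs n / ((A - C + 1) * Ωs n + C) + C * ξ * (Ω n - Ωs n)) := by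
        apply Finset.sum_le_sum
        intro n _
        exact tangent_bound (P n) C (A - C + 1) ξ (Ω n) (hP n) hC ha hξ (hΩ n)
    _ = ∑ n, P n * Ωs n / ((A - C + 1) * Ωs n + C)
        + C * ξ * ((∑ n, Ω n) - ∑ n, Ωs n) := by
        rw [Finset.sum_add_distrib]
        congr 1
        rw [← Finset.mul_sum, Finset.sum_sub_distrib]
    _ = ∑ n, P n * Ωs n / ((A - C + 1) * Ωs n + C) := by
        rw [hΩsum]
        simp [hsum]
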